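/- Let E be a vector lattice such that the canonical embedding Q_E : E → E^~~ is a lattice embedding and Q_E(E) is order dense in E^~~. If E is b-Dedekind complete, then E^~~ is a Dedekind completion of E, i.e. E^δ = E^~~. -/

import Mathlib

open Set

noncomputable section

/-- A subset of a type with an order is order bounded. -/
def OrdBdd {V : Type*} [LE V] (S : Set V) : Prop :=
  ∃ a b : V, ∀ x ∈ S, a ≤ x ∧ x ≤ b

variable (V : Type*) [AddCommGroup V] [Module ℝ V] [Preorder V]

/-- The order dual `V^~` of an ordered vector space `V`: the submodule of those linear
functionals mapping order bounded sets to (order) bounded sets. -/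
def obDual : Submodule ℝ (V →ₗ[ℝ] ℝ) where
  carrier := {f | ∀ S : Set V, OrdBdd S → OrdBdd (f '' S)}
  zero_mem' := by
    intro S _
    exact ⟨0, 0, by rintro _ ⟨x, hx, rfl⟩; simp⟩
  add_mem' := by
    intro f g hf hg S hS
    obtain ⟨a, b, hab⟩ := hf S hS
    obtain ⟨c, d, hcd⟩ := hg S hS
    refine ⟨a + c, b + d, ?_⟩
    rintro _ ⟨x, hx, rfl⟩
    have h1 := hab (f x) ⟨x, hx, rfl⟩
    have h2 := hcd (g x) ⟨x, hx, rfl⟩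
    simp only [LinearMap.add_apply]
    constructor <;> linarith [h1.1, h1.2, h2.1, h2.2]
  smul_mem' := by
    intro c f hf S hS
    obtain ⟨a, b, hab⟩ := hf S hS
    refine ⟨-(|c| * max |a| |b|), |c| * max |a| |b|, ?_⟩
    rintro _ ⟨x, hx, rfl⟩
    obtain ⟨h1a, h1b⟩ := hab (f x) ⟨x, hx, rfl⟩
    have hfx : |f x| ≤ max |a| |b| := by
      refine abs_le.2 ⟨?_, ?_⟩
      · have h := neg_abs_le a
        have h' := le_max_left |a| |b|
        linarith
      · have h := le_abs_self b
        have h' := le_max_right |a| |b|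
        linarith
    have habs : |(c • f) x| ≤ |c| * max |a| |b| := by
      simp only [LinearMap.smul_apply, smul_eq_mul, abs_mul]
      exact mul_le_mul_of_nonneg_left hfx (abs_nonneg c)
    exact abs_le.1 habs

/-- The order on the order dual: `f ≤ g` iff `f x ≤ g x` for every `0 ≤ x`. -/
instance obDualPreorder : Preorder ↥(obDual V) where
  le f g := ∀ x : V, 0 ≤ x → (f : V →ₗ[ℝ] ℝ) x ≤ (g : V →ₗ[ℝ] ℝ) x
  le_refl f x _ := le_rfl
  le_trans f g h h1 h2 x hx := (h1 x hx).trans (h2 x hx)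

/-- The order bidual `V^~~` of `V`. -/
abbrev Bidual := ↥(obDual ↥(obDual V))

instance bidualPreorder : Preorder (Bidual V) := obDualPreorder ↥(obDual V)

variable {V}

/-- Evaluation at `x` as a linear functional on the order dual. -/
def evalMap (x : V) : ↥(obDual V) →ₗ[ℝ] ℝ where
  toFun f := (f : V →ₗ[ℝ] ℝ) x
  map_add' f g := by simp
  map_smul' c f := by simp

variable (E : Type*) [AddCommGroup E] [Module ℝ E] [Lattice E]
  [CovariantClass E E (· + ·) (· ≤ ·)]

/-- The canonical evaluation map `Q_E : E → E^~~`. -/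
def QE (x : E) : Bidual E :=
  ⟨evalMap x, by
    intro S hS
    obtain ⟨φ, ψ, h⟩ := hS
    refine ⟨(φ : E →ₗ[ℝ] ℝ) (x ⊔ 0) - (ψ : E →ₗ[ℝ] ℝ) (-x ⊔ 0),
            (ψ : E →ₗ[ℝ] ℝ) (x ⊔ 0) - (φ : E →ₗ[ℝ] ℝ) (-x ⊔ 0), ?_⟩
    rintro _ ⟨f, hf, rfl⟩
    obtain ⟨hφf, hfψ⟩ := h f hf
    have hx1 : (0 : E) ≤ x ⊔ 0 := le_sup_right
    have hx2 : (0 : E) ≤ -x ⊔ 0 := le_sup_right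
    have hdecomp : (f : E →ₗ[ℝ] ℝ) x
        = (f : E →ₗ[ℝ] ℝ) (x ⊔ 0) - (f : E →ₗ[ℝ] ℝ) (-x ⊔ 0) := by
      rw [← map_sub]
      congr 1
      have := posPart_sub_negPart x
      simpa [posPart, negPart] using this.symm
    have h1 := hφf _ hx1
    have h2 := hfψ _ hx1
    have h3 := hφf _ hx2
    have h4 := hfψ _ hx2
    have hev : evalMap x f = (f : E →ₗ[ℝ] ℝ) x := rfl
    rw [hev, hdecomp]
    exact ⟨by linarith, by linarith⟩⟩

/-- `A ⊆ E` is `b`-order bounded: its canonical image in `E^~~` is order bounded. -/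
def BOrdBddSet (A : Set E) : Prop := OrdBdd (QE E '' A)

/-- `Q_E` is an (injective) lattice embedding of `E` into `E^~~`. -/
def QLatticeEmbedding : Prop :=
  Function.Injective (QE E) ∧ (∀ x y : E, x ≤ y ↔ QE E x ≤ QE E y) ∧
    ∀ x y : E, IsLUB {QE E x, QE E y} (QE E (x ⊔ y))

/-- `E` is `b`-Dedekind complete: every nonempty subset of `E` bounded above by an element
of `E^~~` has a supremum in `E`. -/
def BDedekindComplete : Prop :=
  ∀ S : Set E, S.Nonempty → (∃ φ : Bidual E, ∀ a ∈ S, QE E a ≤ φ) → ∃ s : E, IsLUB S s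

variable {E}

/-- The net `x` in `E` is `b`-order convergent to `a`: some net in `E^~~` with the same
index set decreases to `0` in `E^~~` and dominates `|x i - a|` (canonically embedded). -/
def BOConv {ι : Type*} [Preorder ι] (x : ι → E) (a : E) : Prop :=
  ∃ y : ι → Bidual E, Antitone y ∧ IsGLB (Set.range y) 0 ∧ ∀ i, QE E (|x i - a|) ≤ y i

/-- `x_α ↓_b 0` : the net `x` is decreasing and `inf_α x_α = 0` holds in `E^~~`. -/
def DownB0 {ι : Type*} [Preorder ι] (x : ι → E) : Prop :=
  Antitone x ∧ IsGLB (Set.range fun i => QE E (x i)) 0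

section Operators

variable {G : Type*} [AddCommGroup G] [Module ℝ G] [Lattice G]
  [CovariantClass G G (· + ·) (· ≤ ·)]

/-- `T` is an order bounded operator. -/
def OrderBddOp (T : E →ₗ[ℝ] G) : Prop := ∀ A : Set E, OrdBdd A → OrdBdd (T '' A)

/-- `T` is a `b`-order bounded operator: it maps `b`-order bounded sets to
`b`-order bounded sets. -/
def BOrdBddOp (T : E →ₗ[ℝ] G) : Prop := ∀ A : Set E, BOrdBddSet E A → BOrdBddSet G (T '' A)

/-- `T` is `b`-order continuous: `x_α →bo 0` in `E` implies `T x_α →bo 0` in `G`. -/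
def BOCont (T : E →ₗ[ℝ] G) : Prop :=
  ∀ (ι : Type*) [Preorder ι] [Nonempty ι] [IsDirected ι (· ≤ ·)] (x : ι → E),
    BOConv x 0 → BOConv (fun i => T (x i)) 0

end Operators

section Generic

variable {W : Type*} [AddCommGroup W] [Module ℝ W] [Preorder W]

lemma dual_le_iff {f g : ↥(obDual W)} :
    f ≤ g ↔ ∀ x : W, 0 ≤ x → (f : W →ₗ[ℝ] ℝ) x ≤ (g : W →ₗ[ℝ] ℝ) x := Iff.rfl

lemma dual_zero_apply (x : W) : ((0 : ↥(obDual W)) : W →ₗ[ℝ] ℝ) x = 0 := rfl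

lemma dual_sub_apply (f g : ↥(obDual W)) (x : W) :
    ((f - g : ↥(obDual W)) : W →ₗ[ℝ] ℝ) x
      = (f : W →ₗ[ℝ] ℝ) x - (g : W →ₗ[ℝ] ℝ) x := by
  simp

lemma dual_add_apply (f g : ↥(obDual W)) (x : W) :
    ((f + g : ↥(obDual W)) : W →ₗ[ℝ] ℝ) x
      = (f : W →ₗ[ℝ] ℝ) x + (g : W →ₗ[ℝ] ℝ) x := by
  simp

lemma dual_neg_apply (f : ↥(obDual W)) (x : W) :
    ((-f : ↥(obDual W)) : W →ₗ[ℝ] ℝ) x = -((f : W →ₗ[ℝ] ℝ) x) := by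
  simp

lemma dual_smul_apply (c : ℝ) (f : ↥(obDual W)) (x : W) :
    ((c • f : ↥(obDual W)) : W →ₗ[ℝ] ℝ) x = c * (f : W →ₗ[ℝ] ℝ) x := by
  simp

/-- A "positive part operator" on a preordered module: an abstract version of `x ↦ x⁺`. -/
structure PosPartOp (W : Type*) [AddCommGroup W] [Module ℝ W] [Preorder W] : Type _ where
  P : W → W
  nonneg : ∀ w, 0 ≤ P w
  le_P : ∀ w, w ≤ P w
  min : ∀ w g, w ≤ g → 0 ≤ g → P w ≤ g
  addle : ∀ u v t : W, u ≤ v → u + t ≤ v + t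
  smul_mono : ∀ (c : ℝ) (u v : W), 0 ≤ c → u ≤ v → c • u ≤ c • v
  eqz : ∀ u : W, u ≤ 0 → 0 ≤ u → u = 0

namespace PosPartOp

variable (h : PosPartOp W)
include h

lemma shift' {a b : W} (hab : a ≤ b) (t : W) {c d : W}
    (h1 : a + t = c) (h2 : b + t = d) : c ≤ d := h1 ▸ h2 ▸ h.addle a b t hab

lemma riesz {f1 f2 g : W} (hg0 : 0 ≤ g) (hg : g ≤ f1 + f2) (h1 : 0 ≤ f1) (h2 : 0 ≤ f2) :
    ∃ u v : W, 0 ≤ u ∧ u ≤ f1 ∧ 0 ≤ v ∧ v ≤ f2 ∧ g = u + v := by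
  refine ⟨g - h.P (g - f1), h.P (g - f1), ?_, ?_, h.nonneg _, ?_, by abel⟩
  · -- 0 ≤ g - P (g - f1), since P (g - f1) ≤ g
    have hle : g - f1 ≤ g := h.shift' h1 (g - f1) (by abel) (by abel)
    have := h.min (g - f1) g hle hg0
    exact h.shift' this (-(h.P (g - f1))) (by abel) (by abel)
  · -- g - P (g - f1) ≤ f1 since g - f1 ≤ P (g - f1)
    exact h.shift' (h.le_P (g - f1)) (f1 - h.P (g - f1)) (by abel) (by abel)
  · -- P (g - f1) ≤ f2 since g - f1 ≤ f2
    refine h.min _ _ ?_ h2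
    exact h.shift' hg (-f1) (by abel) (by abel)

end PosPartOp

/-! The sup function on order intervals. -/

lemma memOb (f : ↥(obDual W)) : ∀ S : Set W, OrdBdd S → OrdBdd ((f : W →ₗ[ℝ] ℝ) '' S) := f.2

def qfun (f : ↥(obDual W)) (x : W) : ℝ := sSup ((f : W →ₗ[ℝ] ℝ) '' Set.Icc 0 x)

lemma qfun_bdd (f : ↥(obDual W)) (x : W) :
    BddAbove ((f : W →ₗ[ℝ] ℝ) '' Set.Icc 0 x) := by
  obtain ⟨a, b, hab⟩ := memOb f (Set.Icc 0 x) ⟨0, x, fun y hy => hy⟩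
  exact ⟨b, fun r hr => (hab r hr).2⟩

lemma qfun_ne (f : ↥(obDual W)) {x : W} (hx : 0 ≤ x) :
    ((f : W →ₗ[ℝ] ℝ) '' Set.Icc 0 x).Nonempty := ⟨_, ⟨0, ⟨le_rfl, hx⟩, rfl⟩⟩

lemma le_qfun (f : ↥(obDual W)) {x : W} (hx : 0 ≤ x) : (f : W →ₗ[ℝ] ℝ) x ≤ qfun f x :=
  le_csSup (qfun_bdd f x) ⟨x, ⟨hx, le_rfl⟩, rfl⟩

lemma le_qfun' (f : ↥(obDual W)) {x y : W} (hy0 : 0 ≤ y) (hyx : y ≤ x) :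
    (f : W →ₗ[ℝ] ℝ) y ≤ qfun f x :=
  le_csSup (qfun_bdd f x) ⟨y, ⟨hy0, hyx⟩, rfl⟩

lemma qfun_nonneg (f : ↥(obDual W)) {x : W} (hx : 0 ≤ x) : 0 ≤ qfun f x := by
  have := le_qfun' f le_rfl hx
  simpa using this

lemma qfun_le (f : ↥(obDual W)) {x : W} (hx : 0 ≤ x) {c : ℝ}
    (hc : ∀ y : W, 0 ≤ y → y ≤ x → (f : W →ₗ[ℝ] ℝ) y ≤ c) : qfun f x ≤ c := by
  refine csSup_le (qfun_ne f hx) ?_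
  rintro _ ⟨y, ⟨hy0, hyx⟩, rfl⟩
  exact hc y hy0 hyx

variable (h : PosPartOp W)
include h

lemma qfun_zero (f : ↥(obDual W)) : qfun f 0 = 0 := by
  have h1 : qfun f 0 ≤ 0 := qfun_le f le_rfl fun y hy0 hy1 => by
    rw [h.eqz y hy1 hy0]; simp
  have h2 := qfun_nonneg f (le_refl (0 : W))
  linarith

lemma qfun_add (f : ↥(obDual W)) {x y : W} (hx : 0 ≤ x) (hy : 0 ≤ y) :
    qfun f (x + y) = qfun f x + qfun f y := by
  have hxy : 0 ≤ x + y := hx.trans (h.shift' hy x (by abel) (by abel))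
  refine le_antisymm ?_ ?_
  · refine qfun_le f hxy fun z hz0 hzxy => ?_
    obtain ⟨u, v, hu0, hux, hv0, hvy, rfl⟩ := h.riesz hz0 hzxy hx hy
    rw [map_add]
    exact add_le_add (le_qfun' f hu0 hux) (le_qfun' f hv0 hvy)
  · have key : ∀ u : W, 0 ≤ u → u ≤ x →
        (f : W →ₗ[ℝ] ℝ) u + qfun f y ≤ qfun f (x + y) := by
      intro u hu0 hux
      have : qfun f y ≤ qfun f (x + y) - (f : W →ₗ[ℝ] ℝ) u := by
        refine qfun_le f hy fun v hv0 hvy => ?_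
        have hm : (f : W →ₗ[ℝ] ℝ) (u + v) ≤ qfun f (x + y) := by
          refine le_qfun' f ?_ ?_
          · exact hu0.trans (h.shift' hv0 u (by abel) (by abel))
          · have h1 : u + v ≤ x + v := h.shift' hux v rfl rfl
            have h2 : x + v ≤ x + y := h.shift' hvy x (by abel) (by abel)
            exact h1.trans h2
        rw [map_add] at hm
        linarith
      linarith
    have : qfun f x ≤ qfun f (x + y) - qfun f y := by
      refine qfun_le f hx fun u hu0 hux => ?_
      have := key u hu0 hux
      linarith
    linarith

lemma qfun_smul (f : ↥(obDual W)) {c : ℝ} (hc : 0 < c) {x : W} (hx : 0 ≤ x) :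
    qfun f (c • x) = c * qfun f x := by
  have hcx : 0 ≤ c • x := by
    have := h.smul_mono c 0 x hc.le hx
    simpa using this
  refine le_antisymm ?_ ?_
  · refine qfun_le f hcx fun y hy0 hyx => ?_
    have hmem0 : 0 ≤ c⁻¹ • y := by
      have := h.smul_mono c⁻¹ 0 y (inv_nonneg.2 hc.le) hy0
      simpa using this
    have hmem1 : c⁻¹ • y ≤ x := by
      have := h.smul_mono c⁻¹ y (c • x) (inv_nonneg.2 hc.le) hyx
      rwa [smul_smul, inv_mul_cancel₀ hc.ne', one_smul] at this
    have hval : (f : W →ₗ[ℝ] ℝ) y = c * (f : W →ₗ[ℝ] ℝ) (c⁻¹ • y) := by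
      rw [map_smul, smul_eq_mul, mul_inv_cancel_left₀ hc.ne']
    rw [hval]
    exact mul_le_mul_of_nonneg_left (le_qfun' f hmem0 hmem1) hc.le
  · have : qfun f x ≤ c⁻¹ * qfun f (c • x) := by
      refine qfun_le f hx fun y hy0 hyx => ?_
      have hmem0 : 0 ≤ c • y := by
        have := h.smul_mono c 0 y hc.le hy0
        simpa using this
      have hmem1 : c • y ≤ c • x := h.smul_mono c y x hc.le hyx
      have hval : (f : W →ₗ[ℝ] ℝ) y = c⁻¹ * (f : W →ₗ[ℝ] ℝ) (c • y) := by
        rw [map_smul, smul_eq_mul, inv_mul_cancel_left₀ hc.ne']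
      rw [hval]
      exact mul_le_mul_of_nonneg_left (le_qfun' f hmem0 hmem1) (inv_nonneg.2 hc.le)
    calc c * qfun f x ≤ c * (c⁻¹ * qfun f (c • x)) :=
          mul_le_mul_of_nonneg_left this hc.le
      _ = qfun f (c • x) := by field_simp

lemma qfun_diff (f : ↥(obDual W)) {a b c d : W} (ha : 0 ≤ a) (hb : 0 ≤ b)
    (hc : 0 ≤ c) (hd : 0 ≤ d) (heq : a - b = c - d) :
    qfun f a - qfun f b = qfun f c - qfun f d := by
  have hsum : a + d = c + b := by
    have := sub_eq_sub_iff_add_eq_add.mp heq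
    exact this
  have h1 : qfun f a + qfun f d = qfun f c + qfun f b := by
    rw [← qfun_add h f ha hd, ← qfun_add h f hc hb, hsum]
  linarith

/-! The positive-part functional. -/

def posFunAux (f : ↥(obDual W)) (x : W) : ℝ := qfun f (h.P x) - qfun f (h.P x - x)

lemma posFunAux_eq (f : ↥(obDual W)) {a b x : W} (ha : 0 ≤ a) (hb : 0 ≤ b)
    (hx : x = a - b) : posFunAux h f x = qfun f a - qfun f b := by
  refine qfun_diff h f (h.nonneg x) ?_ ha hb ?_
  · exact h.shift' (h.le_P x) (-x) (by abel) (by abel)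
  · rw [sub_sub_cancel, hx]

lemma posFunAux_add (f : ↥(obDual W)) (x y : W) :
    posFunAux h f (x + y) = posFunAux h f x + posFunAux h f y := by
  have hnn : ∀ u v : W, 0 ≤ u → 0 ≤ v → 0 ≤ u + v := by
    intro u v hu hv
    exact hu.trans (h.shift' hv u (by abel) (by abel))
  have ha : 0 ≤ h.P x + h.P y := hnn _ _ (h.nonneg x) (h.nonneg y)
  have hbx : 0 ≤ h.P x - x := h.shift' (h.le_P x) (-x) (by abel) (by abel)
  have hby : 0 ≤ h.P y - y := h.shift' (h.le_P y) (-y) (by abel) (by abel)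
  have hb : 0 ≤ (h.P x - x) + (h.P y - y) := hnn _ _ hbx hby
  have heq : x + y = (h.P x + h.P y) - ((h.P x - x) + (h.P y - y)) := by abel
  rw [posFunAux_eq h f ha hb heq, qfun_add h f (h.nonneg x) (h.nonneg y),
    qfun_add h f hbx hby]
  simp only [posFunAux]
  ring

lemma posFunAux_neg (f : ↥(obDual W)) (x : W) :
    posFunAux h f (-x) = -posFunAux h f x := by
  have hbx : 0 ≤ h.P x - x := h.shift' (h.le_P x) (-x) (by abel) (by abel)
  rw [posFunAux_eq h f hbx (h.nonneg x) (by abel)]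
  simp only [posFunAux]
  ring

lemma posFunAux_smul (f : ↥(obDual W)) (c : ℝ) (x : W) :
    posFunAux h f (c • x) = c * posFunAux h f x := by
  rcases lt_trichotomy c 0 with hc | hc | hc
  · have hrw : c • x = -((-c) • x) := by rw [neg_smul, neg_neg]
    rw [hrw, posFunAux_neg]
    have hpos : (0 : ℝ) < -c := by linarith
    -- reduce to positive case below; prove positive case inline
    have hposcase : ∀ (d : ℝ), 0 < d → posFunAux h f (d • x) = d * posFunAux h f x := by
      intro d hd
      have ha : 0 ≤ d • h.P x := by
        have := h.smul_mono d 0 (h.P x) hd.le (h.nonneg x)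
        simpa using this
      have hbx : 0 ≤ h.P x - x := h.shift' (h.le_P x) (-x) (by abel) (by abel)
      have hb : 0 ≤ d • (h.P x - x) := by
        have := h.smul_mono d 0 (h.P x - x) hd.le hbx
        simpa using this
      have heq : d • x = d • h.P x - d • (h.P x - x) := by
        rw [← smul_sub, sub_sub_cancel]
      rw [posFunAux_eq h f ha hb heq, qfun_smul h f hd (h.nonneg x),
        qfun_smul h f hd hbx]
      simp only [posFunAux]
      ring
    rw [hposcase (-c) hpos]
    ring
  · subst hc
    have h0 : posFunAux h f 0 = 0 := by
      rw [posFunAux_eq h f le_rfl le_rfl (by abel : (0 : W) = 0 - 0), qfun_zero h f]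
      ring
    rw [zero_smul, h0, zero_mul]
  · have ha : 0 ≤ c • h.P x := by
      have := h.smul_mono c 0 (h.P x) hc.le (h.nonneg x)
      simpa using this
    have hbx : 0 ≤ h.P x - x := h.shift' (h.le_P x) (-x) (by abel) (by abel)
    have hb : 0 ≤ c • (h.P x - x) := by
      have := h.smul_mono c 0 (h.P x - x) hc.le hbx
      simpa using this
    have heq : c • x = c • h.P x - c • (h.P x - x) := by
      rw [← smul_sub, sub_sub_cancel]
    rw [posFunAux_eq h f ha hb heq, qfun_smul h f hc (h.nonneg x),
      qfun_smul h f hc hbx]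
    simp only [posFunAux]
    ring

lemma posFunAux_eq_qfun (f : ↥(obDual W)) {x : W} (hx : 0 ≤ x) :
    posFunAux h f x = qfun f x := by
  rw [posFunAux_eq h f hx le_rfl (by abel), qfun_zero h f]
  ring

lemma posFunAux_nonneg (f : ↥(obDual W)) {x : W} (hx : 0 ≤ x) :
    0 ≤ posFunAux h f x := by
  rw [posFunAux_eq_qfun h f hx]
  exact qfun_nonneg f hx

lemma posFunAux_mono (f : ↥(obDual W)) {x y : W} (hxy : x ≤ y) :
    posFunAux h f x ≤ posFunAux h f y := by
  have hd : 0 ≤ y - x := h.shift' hxy (-x) (by abel) (by abel)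
  have := posFunAux_nonneg h f hd
  have hsplit : posFunAux h f y = posFunAux h f x + posFunAux h f (y - x) := by
    rw [← posFunAux_add h f]
    congr 1
    abel
  linarith

def posLM (f : ↥(obDual W)) : W →ₗ[ℝ] ℝ where
  toFun := posFunAux h f
  map_add' := posFunAux_add h f
  map_smul' := fun c x => posFunAux_smul h f c x

def dualP (f : ↥(obDual W)) : ↥(obDual W) :=
  ⟨posLM h f, by
    intro S hS
    obtain ⟨a, b, hab⟩ := hS
    refine ⟨posFunAux h f a, posFunAux h f b, ?_⟩
    rintro _ ⟨x, hx, rfl⟩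
    exact ⟨posFunAux_mono h f (hab x hx).1, posFunAux_mono h f (hab x hx).2⟩⟩

lemma dualP_apply (f : ↥(obDual W)) (x : W) :
    ((dualP h f : ↥(obDual W)) : W →ₗ[ℝ] ℝ) x = posFunAux h f x := rfl

/-- The lifted positive part operator on the order dual. -/
def PosPartOp.dual (h : PosPartOp W) : PosPartOp ↥(obDual W) where
  P := dualP h
  nonneg f := by
    intro x hx
    rw [dual_zero_apply, dualP_apply]
    exact posFunAux_nonneg h f hx
  le_P f := by
    intro x hx
    rw [dualP_apply, posFunAux_eq_qfun h f hx]
    exact le_qfun f hx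
  min f g hfg hg0 := by
    intro x hx
    rw [dualP_apply, posFunAux_eq_qfun h f hx]
    refine qfun_le f hx fun y hy0 hyx => ?_
    have h1 := hfg y hy0
    have h2 : (g : W →ₗ[ℝ] ℝ) y ≤ (g : W →ₗ[ℝ] ℝ) x := by
      have hd : 0 ≤ x - y := h.shift' hyx (-y) (by abel) (by abel)
      have := hg0 (x - y) hd
      rw [dual_zero_apply, map_sub] at this
      linarith
    linarith
  addle u v t huv := by
    intro x hx
    rw [dual_add_apply, dual_add_apply]
    have := huv x hx
    linarith
  smul_mono c u v hc huv := by
    intro x hx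
    rw [dual_smul_apply, dual_smul_apply]
    exact mul_le_mul_of_nonneg_left (huv x hx) hc
  eqz g h1 h2 := by
    apply Subtype.ext
    apply LinearMap.ext
    intro x
    have hdecomp : x = h.P x - (h.P x - x) := by abel
    have hbx : 0 ≤ h.P x - x := h.shift' (h.le_P x) (-x) (by abel) (by abel)
    have e1 : (g : W →ₗ[ℝ] ℝ) (h.P x) = 0 := by
      have a1 := h1 (h.P x) (h.nonneg x)
      have a2 := h2 (h.P x) (h.nonneg x)
      rw [dual_zero_apply] at a1 a2
      linarith
    have e2 : (g : W →ₗ[ℝ] ℝ) (h.P x - x) = 0 := by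
      have a1 := h1 (h.P x - x) hbx
      have a2 := h2 (h.P x - x) hbx
      rw [dual_zero_apply] at a1 a2
      linarith
    calc (g : W →ₗ[ℝ] ℝ) x = (g : W →ₗ[ℝ] ℝ) (h.P x - (h.P x - x)) := by rw [← hdecomp]
      _ = 0 := by rw [map_sub, e1, e2]; ring

end Generic

section MainAux

variable {E : Type*} [AddCommGroup E] [Module ℝ E] [Lattice E]
  [CovariantClass E E (· + ·) (· ≤ ·)] [PosSMulMono ℝ E]

/-- The positive part operator on the vector lattice `E` itself. -/
def latticeOp : PosPartOp E where
  P x := x⁺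
  nonneg := posPart_nonneg
  le_P := le_posPart
  min w g hwg hg0 := by
    show w⁺ ≤ g
    rw [posPart_def]
    exact sup_le hwg hg0
  addle u v t huv := add_le_add_left huv t
  smul_mono c u v hc huv := smul_le_smul_of_nonneg_left huv hc
  eqz u h1 h2 := le_antisymm h1 h2

/-- The positive part operator on the bidual, obtained by lifting twice. -/
def biOp : PosPartOp (Bidual E) := ((latticeOp (E := E)).dual).dual

lemma QE_apply (x : E) (f : ↥(obDual E)) :
    ((QE E x : Bidual E) : ↥(obDual E) →ₗ[ℝ] ℝ) f = (f : E →ₗ[ℝ] ℝ) x := rfl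

lemma QE_nonneg {x : E} (hx : 0 ≤ x) : (0 : Bidual E) ≤ QE E x := by
  intro f hf
  rw [dual_zero_apply (W := ↥(obDual E)), QE_apply]
  have := hf x hx
  rwa [dual_zero_apply] at this

lemma QE_nonpos {x : E} (hx : x ≤ 0) : QE E x ≤ (0 : Bidual E) := by
  intro f hf
  rw [dual_zero_apply (W := ↥(obDual E)), QE_apply]
  have hnx : (0 : E) ≤ -x := neg_nonneg.2 hx
  have := hf (-x) hnx
  rw [dual_zero_apply, map_neg] at this
  linarith

lemma bidual_sub_nonneg {φ χ : Bidual E} (hle : φ ≤ χ) : (0 : Bidual E) ≤ χ - φ := by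
  intro f hf
  rw [dual_zero_apply (W := ↥(obDual E)), dual_sub_apply (W := ↥(obDual E))]
  have := hle f hf
  linarith

lemma bidual_le_of_sub_nonpos {φ χ : Bidual E} (hle : φ - χ ≤ 0) : φ ≤ χ := by
  intro f hf
  have := hle f hf
  rw [dual_zero_apply (W := ↥(obDual E)), dual_sub_apply (W := ↥(obDual E))] at this
  linarith

lemma majorizes
    (hdense : ∀ φ : Bidual E, 0 < φ → ∃ x : E, 0 < QE E x ∧ QE E x ≤ φ)
    (hbDC : BDedekindComplete E) (hemb : QLatticeEmbedding E) :
    ∀ φ : Bidual E, ∃ x : E, φ ≤ QE E x := by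
  intro φ
  set ψ := (biOp (E := E)).P φ with hψdef
  by_cases hψ : ψ ≤ 0
  · refine ⟨0, ?_⟩
    intro f hf
    have h1 := (biOp (E := E)).le_P φ f hf
    have h2 := hψ f hf
    rw [dual_zero_apply (W := ↥(obDual E))] at h2
    rw [QE_apply]
    have : ((f : E →ₗ[ℝ] ℝ)) 0 = 0 := map_zero _
    rw [this]
    linarith
  · have hψpos : 0 < ψ := lt_iff_le_not_ge.2 ⟨(biOp (E := E)).nonneg φ, hψ⟩
    clear hψ
    set S : Set E := {x : E | 0 ≤ QE E x ∧ QE E x ≤ ψ} with hSdef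
    have hS0 : (0 : E) ∈ S := ⟨QE_nonneg le_rfl, by
      intro f hf
      rw [QE_apply]
      have h0 : ((f : E →ₗ[ℝ] ℝ)) 0 = 0 := map_zero _
      rw [h0]
      have := hψpos.le f hf
      rwa [dual_zero_apply (W := ↥(obDual E))] at this⟩
    obtain ⟨s, hs⟩ := hbDC S ⟨0, hS0⟩ ⟨ψ, fun a ha => ha.2⟩
    have hkey : ψ ≤ QE E s := by
      by_contra hcon
      set ρ := (biOp (E := E)).P (ψ - QE E s) with hρdef
      have hρpos : 0 < ρ := by
        refine lt_iff_le_not_ge.2 ⟨(biOp (E := E)).nonneg _, fun hle => hcon ?_⟩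
        refine bidual_le_of_sub_nonpos (le_trans ((biOp (E := E)).le_P _) hle)
      obtain ⟨x₀, hx₀pos, hx₀le⟩ := hdense ρ hρpos
      clear hcon
      have hstep : ∀ x ∈ S, x + x₀ ∈ S := by
        intro x hx
        have hxs : x ≤ s := hs.1 hx
        have hQxs : QE E x ≤ QE E s := (hemb.2.1 x s).1 hxs
        have h1 : ρ ≤ ψ - QE E x := by
          refine (biOp (E := E)).min _ _ ?_ (bidual_sub_nonneg hx.2)
          intro f hf
          rw [dual_sub_apply (W := ↥(obDual E)), dual_sub_apply (W := ↥(obDual E))]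
          have := hQxs f hf
          linarith
        constructor
        · intro f hf
          rw [dual_zero_apply (W := ↥(obDual E)), QE_apply, map_add]
          have a1 := hx.1 f hf
          rw [dual_zero_apply (W := ↥(obDual E)), QE_apply] at a1
          have a2 := hx₀pos.le f hf
          rw [dual_zero_apply (W := ↥(obDual E)), QE_apply] at a2
          linarith
        · intro f hf
          rw [QE_apply, map_add]
          have a1 := (hx₀le.trans h1) f hf
          rw [QE_apply, dual_sub_apply (W := ↥(obDual E)), QE_apply] at a1
          have a2 := hx.2 f hf
          rw [QE_apply] at a2
          linarith
      have hub : s - x₀ ∈ upperBounds S :=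
        fun x hx => le_sub_iff_add_le.2 (hs.1 (hstep x hx))
      have hss : s ≤ s - x₀ := hs.2 hub
      have hx₀0 : x₀ ≤ 0 := (le_sub_self_iff s).1 hss
      exact (lt_iff_le_not_ge.1 hx₀pos).2 (QE_nonpos hx₀0)
    exact ⟨s, le_trans ((biOp (E := E)).le_P φ) hkey⟩

end MainAux

/-- if `Q_E : E → E^~~` is a lattice embedding with order dense range and `E`
is `b`-Dedekind complete, then `E^~~` is a Dedekind completion of `E`: `E^~~` is Dedekind
complete and `Q_E(E)` is a majorizing, order dense sublattice of `E^~~`. -/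
theorem bidual_isDedekindCompletion {E : Type*} [AddCommGroup E] [Module ℝ E] [Lattice E]
    [CovariantClass E E (· + ·) (· ≤ ·)] [PosSMulMono ℝ E]
    (hemb : QLatticeEmbedding E)
    (hdense : ∀ φ : Bidual E, 0 < φ → ∃ x : E, 0 < QE E x ∧ QE E x ≤ φ)
    (hbDC : BDedekindComplete E) :
    (∀ S : Set (Bidual E), S.Nonempty → BddAbove S → ∃ φ : Bidual E, IsLUB S φ) ∧
      (∀ φ : Bidual E, ∃ x : E, φ ≤ QE E x) ∧
      (∀ φ : Bidual E, 0 < φ → ∃ x : E, 0 < QE E x ∧ QE E x ≤ φ) := by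
  refine ⟨?_, majorizes hdense hbDC hemb, hdense⟩
  intro S hne hbdd
  obtain ⟨φ₀, hφ₀⟩ := hne
  obtain ⟨ψb, hψb⟩ := hbdd
  obtain ⟨xm, hxm⟩ := majorizes hdense hbDC hemb (-φ₀)
  set D : Set E := {x : E | ∃ φ ∈ S, QE E x ≤ φ} with hDdef
  have hmem : -xm ∈ D := ⟨φ₀, hφ₀, by
    intro f hf
    rw [QE_apply, map_neg]
    have := hxm f hf
    rw [dual_neg_apply (W := ↥(obDual E)), QE_apply] at this
    linarith⟩
  obtain ⟨s, hs⟩ := hbDC D ⟨-xm, hmem⟩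
    ⟨ψb, by rintro a ⟨φ, hφS, hle⟩; exact hle.trans (hψb hφS)⟩
  refine ⟨QE E s, fun φ hφ => ?_, fun χ hχ => ?_⟩
  · -- `QE E s` is an upper bound of `S`
    by_contra hcon
    set ρ := (biOp (E := E)).P (φ - QE E s) with hρdef
    have hρpos : 0 < ρ := by
      refine lt_iff_le_not_ge.2 ⟨(biOp (E := E)).nonneg _, fun hle => hcon ?_⟩
      exact bidual_le_of_sub_nonpos (le_trans ((biOp (E := E)).le_P _) hle)
    obtain ⟨x₀, hx₀pos, hx₀le⟩ := hdense ρ hρpos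
    clear hcon
    obtain ⟨xb', hxb'⟩ := majorizes hdense hbDC hemb (-φ)
    have hxb : QE E (-xb') ≤ φ := by
      intro f hf
      rw [QE_apply, map_neg]
      have := hxb' f hf
      rw [dual_neg_apply (W := ↥(obDual E)), QE_apply] at this
      linarith
    have key : ∀ x : E, QE E x ≤ φ → QE E (x + x₀) ≤ φ := by
      intro x hxφ
      have hxs : x ≤ s := hs.1 ⟨φ, hφ, hxφ⟩
      have hQxs : QE E x ≤ QE E s := (hemb.2.1 x s).1 hxs
      have h1 : ρ ≤ φ - QE E x := by
        refine (biOp (E := E)).min _ _ ?_ (bidual_sub_nonneg hxφ)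
        intro f hf
        rw [dual_sub_apply (W := ↥(obDual E)), dual_sub_apply (W := ↥(obDual E))]
        have := hQxs f hf
        rw [QE_apply, QE_apply] at this
        rw [QE_apply, QE_apply]
        linarith
      intro f hf
      rw [QE_apply, map_add]
      have a1 := (hx₀le.trans h1) f hf
      rw [QE_apply, dual_sub_apply (W := ↥(obDual E)), QE_apply] at a1
      have a2 := hxφ f hf
      rw [QE_apply] at a2
      linarith
    have hiter : ∀ n : ℕ, QE E (-xb' + n • x₀) ≤ φ := by
      intro n
      induction n with
      | zero => simpa using hxb
      | succ n ih =>
        have h2 := key _ ih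
        rwa [show -xb' + n • x₀ + x₀ = -xb' + (n + 1) • x₀ by
          rw [succ_nsmul, add_assoc]] at h2
    have hles : ∀ n : ℕ, -xb' + n • x₀ ≤ s := fun n => hs.1 ⟨φ, hφ, hiter n⟩
    obtain ⟨f, hf0, hfx⟩ : ∃ f : ↥(obDual E), 0 ≤ f ∧ 0 < (f : E →ₗ[ℝ] ℝ) x₀ := by
      by_contra hno
      push_neg at hno
      refine (lt_iff_le_not_ge.1 hx₀pos).2 ?_
      intro f hf
      rw [dual_zero_apply (W := ↥(obDual E)), QE_apply]
      exact hno f hf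
    have hbound : ∀ n : ℕ,
        (f : E →ₗ[ℝ] ℝ) (-xb') + (n : ℝ) * (f : E →ₗ[ℝ] ℝ) x₀ ≤ (f : E →ₗ[ℝ] ℝ) s := by
      intro n
      have hd : (0 : E) ≤ s - (-xb' + n • x₀) := sub_nonneg.2 (hles n)
      have := hf0 _ hd
      rw [dual_zero_apply, map_sub, map_add, map_nsmul] at this
      simp only [nsmul_eq_mul] at this
      linarith
    obtain ⟨n, hn⟩ := exists_nat_gt
      (((f : E →ₗ[ℝ] ℝ) s - (f : E →ₗ[ℝ] ℝ) (-xb')) / (f : E →ₗ[ℝ] ℝ) x₀)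
    rw [div_lt_iff₀ hfx] at hn
    have := hbound n
    linarith
  · -- `QE E s` is below every upper bound `χ` of `S`
    by_contra hcon
    set ρ := (biOp (E := E)).P (QE E s - χ) with hρdef
    have hρpos : 0 < ρ := by
      refine lt_iff_le_not_ge.2 ⟨(biOp (E := E)).nonneg _, fun hle => hcon ?_⟩
      exact bidual_le_of_sub_nonpos (le_trans ((biOp (E := E)).le_P _) hle)
    obtain ⟨x₀, hx₀pos, hx₀le⟩ := hdense ρ hρpos
    clear hcon
    have hub : s - x₀ ∈ upperBounds D := by
      rintro x ⟨φ, hφS, hxφ⟩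
      have hxs : x ≤ s := hs.1 ⟨φ, hφS, hxφ⟩
      have hQxs : QE E x ≤ QE E s := (hemb.2.1 x s).1 hxs
      have hxχ : QE E x ≤ χ := hxφ.trans (hχ hφS)
      have h1 : ρ ≤ QE E s - QE E x := by
        refine (biOp (E := E)).min _ _ ?_ (bidual_sub_nonneg hQxs)
        intro f hf
        rw [dual_sub_apply (W := ↥(obDual E)), dual_sub_apply (W := ↥(obDual E))]
        have := hxχ f hf
        rw [QE_apply] at this
        rw [QE_apply, QE_apply]
        linarith
      have h2 : QE E (x + x₀) ≤ QE E s := by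
        intro f hf
        rw [QE_apply, QE_apply, map_add]
        have a1 := (hx₀le.trans h1) f hf
        rw [QE_apply, dual_sub_apply (W := ↥(obDual E)), QE_apply, QE_apply] at a1
        linarith
      exact le_sub_iff_add_le.2 ((hemb.2.1 (x + x₀) s).2 h2)
    have hss : s ≤ s - x₀ := hs.2 hub
    have hx₀0 : x₀ ≤ 0 := (le_sub_self_iff s).1 hss
    exact (lt_iff_le_not_ge.1 hx₀pos).2 (QE_nonpos hx₀0)
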